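/- Fix integers n ≥ 1, m ≥ 2. Let f_m := Σ_{j=1}^{m−1} j(m−j)·E_{n+j+1,n+j} ∈ sl_{n+m}(ℂ). Then the centralizer {Z ∈ sl_{n+m}(ℂ) : Z·f_m = f_m·Z} equals the set of all matrices of the form Σ_{1≤i,j≤n} x_{ij}E_{i,j} − ((Σ_{i=1}^n x_{ii})/m)·Σ_{j=n+1}^{n+m} E_{j,j} + Σ_{i=1}^{n} u_i E_{i,n+1} + Σ_{i=1}^{n} v_i E_{n+m,i} + Σ_{k=1}^{m−1} w_k f_m^k with x_{ij}, u_i, v_i, w_k ∈ ℂ; in particular it has dimension n² + 2n + m − 1. (The explicit description of the Slodowy slice s_{n,m} = e_m + Ker ad(f_m) in sl_{n+m} from the proof of Theorem 3.1(a).) -/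

import Mathlib

namespace SlodowyAux

open Matrix

/-- subdiagonal coefficient at absolute column index `q` -/
def cc (n m q : ℕ) : ℂ := (((q - n + 1) * (m - (q - n + 1)) : ℕ) : ℂ)

/-- product of `k` consecutive coefficients starting at column `q` -/
def gam (n m q k : ℕ) : ℂ := ∏ r ∈ Finset.range k, cc n m (q + r)

lemma cc_ne_zero {n m q : ℕ} (h1 : n ≤ q) (h2 : q + 1 < n + m) : cc n m q ≠ 0 := by
  have h : (q - n + 1) * (m - (q - n + 1)) ≠ 0 := by
    have : 1 ≤ q - n + 1 := by omega
    have : 1 ≤ m - (q - n + 1) := by omega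
    positivity
  exact_mod_cast Nat.cast_ne_zero.mpr h

lemma gam_zero (n m q : ℕ) : gam n m q 0 = 1 := by simp [gam]

lemma gam_succ (n m q k : ℕ) : gam n m q (k + 1) = gam n m q k * cc n m (q + k) := by
  simp [gam, Finset.prod_range_succ]

lemma gam_succ' (n m q k : ℕ) : gam n m q (k + 1) = cc n m q * gam n m (q + 1) k := by
  rw [gam, Finset.prod_range_succ', Nat.add_zero, mul_comm]
  congr 1
  exact Finset.prod_congr rfl fun r _ => by congr 1; omega

lemma gam_ne_zero {n m q k : ℕ} (h1 : n ≤ q) (h2 : q + k < n + m) : gam n m q k ≠ 0 := by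
  rw [gam, Finset.prod_ne_zero_iff]
  intro r hr
  simp only [Finset.mem_range] at hr
  exact cc_ne_zero (by omega) (by omega)

section fm

variable {n m : ℕ} {fm : Matrix (Fin (n + m)) (Fin (n + m)) ℂ}
  (hE : ∀ i j : Fin (n + m), fm i j =
    if i.val = j.val + 1 ∧ n ≤ j.val then cc n m j.val else 0)

include hE

lemma mul_fm_apply (A : Matrix (Fin (n + m)) (Fin (n + m)) ℂ) (i j : Fin (n + m)) :
    (A * fm) i j = if h : n ≤ j.val ∧ j.val + 1 < n + m then
      A i ⟨j.val + 1, h.2⟩ * cc n m j.val else 0 := by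
  rw [Matrix.mul_apply]
  split_ifs with h
  · rw [Finset.sum_eq_single (⟨j.val + 1, h.2⟩ : Fin (n + m))]
    · rw [hE, if_pos (show ((⟨j.val + 1, h.2⟩ : Fin (n + m)) : ℕ) = j.val + 1 ∧ n ≤ j.val
        from ⟨rfl, h.1⟩)]
    · intro k _ hk
      rw [hE, if_neg, mul_zero]
      rintro ⟨hk1, -⟩
      exact hk (Fin.ext hk1)
    · intro hmem; exact absurd (Finset.mem_univ _) hmem
  · apply Finset.sum_eq_zero
    intro k _
    rw [hE, if_neg, mul_zero]
    rintro ⟨hk1, hk2⟩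
    have := k.isLt
    omega

lemma fm_mul_apply (A : Matrix (Fin (n + m)) (Fin (n + m)) ℂ) (i j : Fin (n + m)) :
    (fm * A) i j = if h : n + 1 ≤ i.val then
      cc n m (i.val - 1) * A ⟨i.val - 1, by have := i.isLt; omega⟩ j else 0 := by
  rw [Matrix.mul_apply]
  split_ifs with h
  · rw [Finset.sum_eq_single (⟨i.val - 1, by have := i.isLt; omega⟩ : Fin (n + m))]
    · rw [hE, if_pos (show (i : ℕ) = (i.val - 1) + 1 ∧ n ≤ i.val - 1
        from ⟨by omega, by omega⟩)]
    · intro k _ hk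
      rw [hE, if_neg, zero_mul]
      rintro ⟨hk1, -⟩
      exact hk (Fin.ext (show (k : ℕ) = i.val - 1 by omega))
    · intro hmem; exact absurd (Finset.mem_univ _) hmem
  · apply Finset.sum_eq_zero
    intro k _
    rw [hE, if_neg, zero_mul]
    rintro ⟨hk1, hk2⟩
    omega

lemma fm_pow_apply (k : ℕ) (i j : Fin (n + m)) :
    (fm ^ (k + 1)) i j = if i.val = j.val + (k + 1) ∧ n ≤ j.val then
      gam n m j.val (k + 1) else 0 := by
  induction k generalizing i j with
  | zero =>
    rw [pow_one, hE, gam_succ, gam_zero, one_mul]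
    norm_num
  | succ k ih =>
    rw [pow_succ, mul_fm_apply hE]
    split_ifs with h1 h2 h2
    · rw [ih, if_pos (show (i : ℕ) = (j.val + 1) + (k + 1) ∧ n ≤ j.val + 1
        from ⟨by omega, by omega⟩)]
      show gam n m (j.val + 1) (k + 1) * cc n m j.val = gam n m j.val (k + 1 + 1)
      conv_rhs => rw [gam_succ']
      ring
    · rw [ih, if_neg, zero_mul]
      rintro ⟨ha, -⟩
      have : (i : ℕ) = (j.val + 1) + (k + 1) := ha
      exact h2 ⟨by omega, h1.1⟩
    · exfalso
      have := i.isLt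
      exact h1 ⟨h2.2, by omega⟩
    · rfl

end fm

section pieces

variable {n m : ℕ}

lemma P1_apply (hnm : n ≤ n + m) (x : Matrix (Fin n) (Fin n) ℂ) (a b : Fin (n + m)) :
    (∑ i : Fin n, ∑ j : Fin n, x i j •
        Matrix.single (Fin.castLE hnm i) (Fin.castLE hnm j) (1 : ℂ)) a b
      = if h : a.val < n ∧ b.val < n then x ⟨a.1, h.1⟩ ⟨b.1, h.2⟩ else 0 := by
  simp only [Matrix.sum_apply, Matrix.smul_apply, Matrix.single, Matrix.of_apply,
    smul_eq_mul, Fin.ext_iff, Fin.coe_castLE]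
  split_ifs with h
  · rw [Finset.sum_eq_single (⟨a.1, h.1⟩ : Fin n)]
    · rw [Finset.sum_eq_single (⟨b.1, h.2⟩ : Fin n)]
      · rw [if_pos ⟨rfl, rfl⟩, mul_one]
      · intro j _ hj
        rw [if_neg, mul_zero]
        rintro ⟨-, hj2⟩
        exact hj (Fin.ext hj2)
      · intro hmem; exact absurd (Finset.mem_univ _) hmem
    · intro i _ hi
      apply Finset.sum_eq_zero
      intro j _
      rw [if_neg, mul_zero]
      rintro ⟨hi2, -⟩
      exact hi (Fin.ext hi2)
    · intro hmem; exact absurd (Finset.mem_univ _) hmem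
  · apply Finset.sum_eq_zero
    intro i _
    apply Finset.sum_eq_zero
    intro j _
    rw [if_neg, mul_zero]
    rintro ⟨hi2, hj2⟩
    have := i.isLt
    have := j.isLt
    omega

lemma P2_apply (a b : Fin (n + m)) :
    (∑ j : Fin m, Matrix.single (Fin.natAdd n j) (Fin.natAdd n j) (1 : ℂ)) a b
      = if a.val = b.val ∧ n ≤ a.val then 1 else 0 := by
  simp only [Matrix.sum_apply, Matrix.single, Matrix.of_apply, Fin.ext_iff,
    Fin.coe_natAdd]
  split_ifs with h
  · rw [Finset.sum_eq_single (⟨a.val - n, by have := a.isLt; omega⟩ : Fin m)]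
    · rw [if_pos (show n + (a.val - n) = a.val ∧ n + (a.val - n) = b.val
        from ⟨by omega, by omega⟩)]
    · intro k _ hk
      rw [if_neg]
      rintro ⟨hk1, -⟩
      exact hk (Fin.ext (show (k : ℕ) = a.val - n by omega))
    · intro hmem; exact absurd (Finset.mem_univ _) hmem
  · apply Finset.sum_eq_zero
    intro k _
    rw [if_neg]
    rintro ⟨hk1, hk2⟩
    omega

lemma P3_apply (hnm : n ≤ n + m) (hlt : n < n + m) (u : Fin n → ℂ) (a b : Fin (n + m)) :
    (∑ i : Fin n, u i • Matrix.single (Fin.castLE hnm i) (⟨n, hlt⟩ : Fin (n + m))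
        (1 : ℂ)) a b
      = if h : a.val < n ∧ b.val = n then u ⟨a.1, h.1⟩ else 0 := by
  simp only [Matrix.sum_apply, Matrix.smul_apply, Matrix.single, Matrix.of_apply,
    smul_eq_mul, Fin.ext_iff, Fin.coe_castLE]
  split_ifs with h
  · rw [Finset.sum_eq_single (⟨a.1, h.1⟩ : Fin n)]
    · rw [if_pos ⟨rfl, h.2.symm⟩, mul_one]
    · intro i _ hi
      rw [if_neg, mul_zero]
      rintro ⟨hi2, -⟩
      exact hi (Fin.ext hi2)
    · intro hmem; exact absurd (Finset.mem_univ _) hmem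
  · apply Finset.sum_eq_zero
    intro i _
    rw [if_neg, mul_zero]
    rintro ⟨hi2, hj2⟩
    have := i.isLt
    omega

lemma P4_apply (hnm : n ≤ n + m) (hlt : n + m - 1 < n + m) (v : Fin n → ℂ) (a b : Fin (n + m)) :
    (∑ i : Fin n, v i • Matrix.single (⟨n + m - 1, hlt⟩ : Fin (n + m))
        (Fin.castLE hnm i) (1 : ℂ)) a b
      = if h : a.val = n + m - 1 ∧ b.val < n then v ⟨b.1, h.2⟩ else 0 := by
  simp only [Matrix.sum_apply, Matrix.smul_apply, Matrix.single, Matrix.of_apply,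
    smul_eq_mul, Fin.ext_iff, Fin.coe_castLE]
  split_ifs with h
  · rw [Finset.sum_eq_single (⟨b.1, h.2⟩ : Fin n)]
    · rw [if_pos ⟨h.1.symm, rfl⟩, mul_one]
    · intro i _ hi
      rw [if_neg, mul_zero]
      rintro ⟨-, hi2⟩
      exact hi (Fin.ext hi2)
    · intro hmem; exact absurd (Finset.mem_univ _) hmem
  · apply Finset.sum_eq_zero
    intro i _
    rw [if_neg, mul_zero]
    rintro ⟨hi2, hj2⟩
    have := i.isLt
    omega

variable {fm : Matrix (Fin (n + m)) (Fin (n + m)) ℂ}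
  (hE : ∀ i j : Fin (n + m), fm i j =
    if i.val = j.val + 1 ∧ n ≤ j.val then cc n m j.val else 0)

include hE

lemma P5_apply (w : Fin (m - 1) → ℂ) (a b : Fin (n + m)) :
    (∑ k : Fin (m - 1), w k • fm ^ (k.val + 1)) a b
      = if h : n ≤ b.val ∧ b.val < a.val then
          w ⟨a.val - b.val - 1, by have := a.isLt; omega⟩ * gam n m b.val (a.val - b.val)
        else 0 := by
  simp only [Matrix.sum_apply, Matrix.smul_apply, smul_eq_mul, fm_pow_apply hE]
  split_ifs with h
  · rw [Finset.sum_eq_single (⟨a.val - b.val - 1, by have := a.isLt; omega⟩ : Fin (m - 1))]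
    · rw [if_pos (show a.val = b.val + ((a.val - b.val - 1) + 1) ∧ n ≤ b.val
        from ⟨by omega, h.1⟩)]
      show _ * gam n m b.val (a.val - b.val - 1 + 1) = _
      rw [show a.val - b.val - 1 + 1 = a.val - b.val by omega]
    · intro k _ hk
      rw [if_neg, mul_zero]
      rintro ⟨hk1, -⟩
      exact hk (Fin.ext (show (k : ℕ) = a.val - b.val - 1 by omega))
    · intro hmem; exact absurd (Finset.mem_univ _) hmem
  · apply Finset.sum_eq_zero
    intro k _
    rw [if_neg, mul_zero]
    rintro ⟨hk1, hk2⟩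
    omega

end pieces

noncomputable def Phi (n m : ℕ) (hn : 1 ≤ n) (hm : 2 ≤ m) (fm : Matrix (Fin (n + m)) (Fin (n + m)) ℂ)
    (x : Matrix (Fin n) (Fin n) ℂ) (u v : Fin n → ℂ) (w : Fin (m - 1) → ℂ) :
    Matrix (Fin (n + m)) (Fin (n + m)) ℂ :=
  (∑ i : Fin n, ∑ j : Fin n, x i j •
      Matrix.single (Fin.castLE (by have := hn; omega) i) (Fin.castLE (by have := hn; omega) j) (1 : ℂ))
    - ((∑ i : Fin n, x i i) / (m : ℂ)) •
        (∑ j : Fin m, Matrix.single (Fin.natAdd n j) (Fin.natAdd n j) (1 : ℂ))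
    + (∑ i : Fin n, u i • Matrix.single (Fin.castLE (by have := hn; omega) i) ⟨n, by have := hn; omega⟩ (1 : ℂ))
    + (∑ i : Fin n, v i • Matrix.single ⟨n + m - 1, by have := hn; omega⟩
        (Fin.castLE (by have := hn; omega) i) (1 : ℂ))
    + (∑ k : Fin (m - 1), w k • fm ^ (k.val + 1))

lemma Phi_apply {n m : ℕ} (hn : 1 ≤ n) (hm : 2 ≤ m)
    {fm : Matrix (Fin (n + m)) (Fin (n + m)) ℂ}
    (hE : ∀ i j : Fin (n + m), fm i j =
      if i.val = j.val + 1 ∧ n ≤ j.val then cc n m j.val else 0)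
    (x : Matrix (Fin n) (Fin n) ℂ) (u v : Fin n → ℂ) (w : Fin (m - 1) → ℂ)
    (a b : Fin (n + m)) :
    Phi n m hn hm fm x u v w a b =
      (if h : a.val < n ∧ b.val < n then x ⟨a.1, h.1⟩ ⟨b.1, h.2⟩ else 0)
      - (∑ i : Fin n, x i i) / (m : ℂ) * (if a.val = b.val ∧ n ≤ a.val then 1 else 0)
      + (if h : a.val < n ∧ b.val = n then u ⟨a.1, h.1⟩ else 0)
      + (if h : a.val = n + m - 1 ∧ b.val < n then v ⟨b.1, h.2⟩ else 0)
      + (if h : n ≤ b.val ∧ b.val < a.val then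
          w ⟨a.val - b.val - 1, by have := a.isLt; omega⟩ * gam n m b.val (a.val - b.val)
        else 0) := by
  unfold Phi
  simp only [Matrix.add_apply, Matrix.sub_apply, Matrix.smul_apply, smul_eq_mul]
  rw [P1_apply, P2_apply, P3_apply, P4_apply, P5_apply hE]

lemma hfm_entry (n m : ℕ) (hn : 1 ≤ n) (hm : 2 ≤ m)
    (fm : Matrix (Fin (n + m)) (Fin (n + m)) ℂ)
    (hfm : fm = ∑ j : Fin (m - 1),
      Matrix.single ⟨n + j.val + 1, by have := j.isLt; clear hm; omega⟩
        ⟨n + j.val, by have := j.isLt; clear hm; omega⟩ (((j.val + 1) * (m - (j.val + 1)) : ℕ) : ℂ)) :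
    ∀ i j : Fin (n + m), fm i j =
      if i.val = j.val + 1 ∧ n ≤ j.val then cc n m j.val else 0 := by
  subst hfm
  intro i j
  rw [Matrix.sum_apply]
  simp only [Matrix.single, Matrix.of_apply, Fin.ext_iff]
  split_ifs with h
  · rw [Finset.sum_eq_single (⟨j.val - n, by have := i.isLt; omega⟩ : Fin (m - 1))]
    · rw [if_pos (show n + (j.val - n) + 1 = i.val ∧ n + (j.val - n) = j.val
        from ⟨by omega, by omega⟩)]
      show ((((j.val - n) + 1) * (m - ((j.val - n) + 1)) : ℕ) : ℂ) = cc n m j.val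
      rfl
    · intro k _ hk
      rw [if_neg]
      rintro ⟨-, hk2⟩
      exact hk (Fin.ext (show (k : ℕ) = j.val - n by omega))
    · intro hmem; exact absurd (Finset.mem_univ _) hmem
  · apply Finset.sum_eq_zero
    intro k _
    rw [if_neg]
    rintro ⟨hk1, hk2⟩
    omega

section membership

variable {n m : ℕ} (hn : 1 ≤ n) (hm : 2 ≤ m)
  {fm : Matrix (Fin (n + m)) (Fin (n + m)) ℂ}
  (hE : ∀ i j : Fin (n + m), fm i j =
    if i.val = j.val + 1 ∧ n ≤ j.val then cc n m j.val else 0)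
  (x : Matrix (Fin n) (Fin n) ℂ) (u v : Fin n → ℂ) (w : Fin (m - 1) → ℂ)

include hE

lemma Phi_diag (a : Fin (n + m)) :
    Phi n m hn hm fm x u v w a a =
      if h : a.val < n then x ⟨a.1, h⟩ ⟨a.1, h⟩ else -((∑ i : Fin n, x i i) / (m : ℂ)) := by
  rw [Phi_apply hn hm hE]
  by_cases ha : a.val < n
  · have h1 : a.val < n ∧ a.val < n := ⟨ha, ha⟩
    have h2 : ¬(a.val = a.val ∧ n ≤ a.val) := by omega
    have h3 : ¬(a.val < n ∧ a.val = n) := by omega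
    have h4 : ¬(a.val = n + m - 1 ∧ a.val < n) := by omega
    have h5 : ¬(n ≤ a.val ∧ a.val < a.val) := by omega
    rw [dif_pos h1, if_neg h2, dif_neg h3, dif_neg h4, dif_neg h5, dif_pos ha]
    ring
  · have h1 : ¬(a.val < n ∧ a.val < n) := by omega
    have h2 : a.val = a.val ∧ n ≤ a.val := ⟨rfl, by omega⟩
    have h3 : ¬(a.val < n ∧ a.val = n) := by omega
    have h4 : ¬(a.val = n + m - 1 ∧ a.val < n) := by omega
    have h5 : ¬(n ≤ a.val ∧ a.val < a.val) := by omega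
    rw [dif_neg h1, if_pos h2, dif_neg h3, dif_neg h4, dif_neg h5, dif_neg ha]
    ring

lemma Phi_trace : Matrix.trace (Phi n m hn hm fm x u v w) = 0 := by
  rw [Matrix.trace]
  have hd : ∀ a : Fin (n + m), Matrix.diag (Phi n m hn hm fm x u v w) a =
      Phi n m hn hm fm x u v w a a := fun a => rfl
  simp only [hd]
  rw [Fin.sum_univ_add]
  have e1 : ∀ i : Fin n, Phi n m hn hm fm x u v w (Fin.castAdd m i) (Fin.castAdd m i)
      = x i i := by
    intro i
    rw [Phi_diag hn hm hE, dif_pos (show (Fin.castAdd m i).val < n from i.isLt)]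
    congr 1 <;> exact Fin.ext rfl
  have e2 : ∀ j : Fin m, Phi n m hn hm fm x u v w (Fin.natAdd n j) (Fin.natAdd n j)
      = -((∑ i : Fin n, x i i) / (m : ℂ)) := by
    intro j
    rw [Phi_diag hn hm hE, dif_neg (show ¬((Fin.natAdd n j).val < n) by
      simp only [Fin.coe_natAdd]; omega)]
  simp only [e1, e2]
  rw [Finset.sum_const, Finset.card_univ, Fintype.card_fin, nsmul_eq_mul]
  have hm0 : (m : ℂ) ≠ 0 := Nat.cast_ne_zero.mpr (by omega)
  field_simp
  ring

set_option maxHeartbeats 3000000 in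
lemma Phi_comm :
    Phi n m hn hm fm x u v w * fm = fm * Phi n m hn hm fm x u v w := by
  ext i j
  rw [mul_fm_apply hE, fm_mul_apply hE]
  by_cases hi : n + 1 ≤ i.val <;> by_cases hj : n ≤ j.val ∧ j.val + 1 < n + m
  · -- hi and hj
    rw [dif_pos hj, dif_pos hi, Phi_apply hn hm hE, Phi_apply hn hm hE]
    simp only [Fin.val_mk]
    have hiLt := i.isLt
    rcases lt_trichotomy i.val (j.val + 1) with hij | hij | hij
    · -- i ≤ j : both Phi entries vanish
      have c1 : ¬(i.val < n ∧ j.val + 1 < n) := by omega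
      have c2 : ¬(i.val = j.val + 1 ∧ n ≤ i.val) := by omega
      have c3 : ¬(i.val < n ∧ j.val + 1 = n) := by omega
      have c4 : ¬(i.val = n + m - 1 ∧ j.val + 1 < n) := by omega
      have c5 : ¬(n ≤ j.val + 1 ∧ j.val + 1 < i.val) := by omega
      have d1 : ¬(i.val - 1 < n ∧ j.val < n) := by omega
      have d2 : ¬(i.val - 1 = j.val ∧ n ≤ i.val - 1) := by omega
      have d3 : ¬(i.val - 1 < n ∧ j.val = n) := by omega
      have d4 : ¬(i.val - 1 = n + m - 1 ∧ j.val < n) := by omega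
      have d5 : ¬(n ≤ j.val ∧ j.val < i.val - 1) := by omega
      rw [dif_neg c1, if_neg c2, dif_neg c3, dif_neg c4, dif_neg c5,
        dif_neg d1, if_neg d2, dif_neg d3, dif_neg d4, dif_neg d5]
      ring
    · -- i = j + 1 : diagonal entries
      have c1 : ¬(i.val < n ∧ j.val + 1 < n) := by omega
      have c2 : i.val = j.val + 1 ∧ n ≤ i.val := by omega
      have c3 : ¬(i.val < n ∧ j.val + 1 = n) := by omega
      have c4 : ¬(i.val = n + m - 1 ∧ j.val + 1 < n) := by omega
      have c5 : ¬(n ≤ j.val + 1 ∧ j.val + 1 < i.val) := by omega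
      have d1 : ¬(i.val - 1 < n ∧ j.val < n) := by omega
      have d2 : i.val - 1 = j.val ∧ n ≤ i.val - 1 := by omega
      have d3 : ¬(i.val - 1 < n ∧ j.val = n) := by omega
      have d4 : ¬(i.val - 1 = n + m - 1 ∧ j.val < n) := by omega
      have d5 : ¬(n ≤ j.val ∧ j.val < i.val - 1) := by omega
      rw [dif_neg c1, if_pos c2, dif_neg c3, dif_neg c4, dif_neg c5,
        dif_neg d1, if_pos d2, dif_neg d3, dif_neg d4, dif_neg d5,
        show i.val - 1 = j.val by omega]
      ring
    · -- i > j + 1 : w region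
      have c1 : ¬(i.val < n ∧ j.val + 1 < n) := by omega
      have c2 : ¬(i.val = j.val + 1 ∧ n ≤ i.val) := by omega
      have c3 : ¬(i.val < n ∧ j.val + 1 = n) := by omega
      have c4 : ¬(i.val = n + m - 1 ∧ j.val + 1 < n) := by omega
      have c5 : n ≤ j.val + 1 ∧ j.val + 1 < i.val := by omega
      have d1 : ¬(i.val - 1 < n ∧ j.val < n) := by omega
      have d2 : ¬(i.val - 1 = j.val ∧ n ≤ i.val - 1) := by omega
      have d3 : ¬(i.val - 1 < n ∧ j.val = n) := by omega
      have d4 : ¬(i.val - 1 = n + m - 1 ∧ j.val < n) := by omega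
      have d5 : n ≤ j.val ∧ j.val < i.val - 1 := by omega
      rw [dif_neg c1, if_neg c2, dif_neg c3, dif_neg c4, dif_pos c5,
        dif_neg d1, if_neg d2, dif_neg d3, dif_neg d4, dif_pos d5]
      have hw : (⟨i.val - (j.val + 1) - 1, by omega⟩ : Fin (m - 1))
          = ⟨i.val - 1 - j.val - 1, by omega⟩ :=
        Fin.ext (show i.val - (j.val + 1) - 1 = i.val - 1 - j.val - 1 by omega)
      rw [hw]
      set e := i.val - 1 - j.val - 1 with he
      have g1 : gam n m (j.val + 1) (i.val - (j.val + 1)) = gam n m (j.val + 1) (e + 1) :=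
        congrArg _ (by omega)
      have g2 : gam n m j.val (i.val - 1 - j.val) = gam n m j.val (e + 1) :=
        congrArg _ (by omega)
      have g3 : cc n m (i.val - 1) = cc n m (j.val + (e + 1)) := congrArg _ (by omega)
      rw [g1, g2, g3]
      have h3 : gam n m j.val (e + 1 + 1) = cc n m j.val * (cc n m (j.val + 1) *
          gam n m (j.val + 1 + 1) e) := by rw [gam_succ', gam_succ']
      have h4 : gam n m j.val (e + 1 + 1) = gam n m j.val (e + 1) * cc n m (j.val + (e + 1)) :=
        gam_succ n m j.val (e + 1)
      have h5 := h3.symm.trans h4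
      rw [gam_succ' n m (j.val + 1) e]
      linear_combination (w ⟨e, by omega⟩) * h5
  · -- hi, ¬hj
    rw [dif_neg hj, dif_pos hi, Phi_apply hn hm hE]
    simp only [Fin.val_mk]
    have hiLt := i.isLt
    have hjLt := j.isLt
    have d1 : ¬(i.val - 1 < n ∧ j.val < n) := by omega
    have d2 : ¬(i.val - 1 = j.val ∧ n ≤ i.val - 1) := by omega
    have d3 : ¬(i.val - 1 < n ∧ j.val = n) := by omega
    have d4 : ¬(i.val - 1 = n + m - 1 ∧ j.val < n) := by omega
    have d5 : ¬(n ≤ j.val ∧ j.val < i.val - 1) := by omega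
    rw [dif_neg d1, if_neg d2, dif_neg d3, dif_neg d4, dif_neg d5]
    ring
  · -- ¬hi, hj
    rw [dif_pos hj, dif_neg hi, Phi_apply hn hm hE]
    simp only [Fin.val_mk]
    have c1 : ¬(i.val < n ∧ j.val + 1 < n) := by omega
    have c2 : ¬(i.val = j.val + 1 ∧ n ≤ i.val) := by omega
    have c3 : ¬(i.val < n ∧ j.val + 1 = n) := by omega
    have c4 : ¬(i.val = n + m - 1 ∧ j.val + 1 < n) := by omega
    have c5 : ¬(n ≤ j.val + 1 ∧ j.val + 1 < i.val) := by omega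
    rw [dif_neg c1, if_neg c2, dif_neg c3, dif_neg c4, dif_neg c5]
    ring
  · rw [dif_neg hj, dif_neg hi]

end membership

section forward

variable {n m : ℕ} {fm : Matrix (Fin (n + m)) (Fin (n + m)) ℂ}
  (hE : ∀ i j : Fin (n + m), fm i j =
    if i.val = j.val + 1 ∧ n ≤ j.val then cc n m j.val else 0)
  {Z : Matrix (Fin (n + m)) (Fin (n + m)) ℂ}
  (hc : Z * fm = fm * Z)

include hE hc

lemma fact1 (i : Fin (n + m)) (q : ℕ) (hi : i.val ≤ n) (hq1 : n + 1 ≤ q) (hq2 : q < n + m) :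
    Z i ⟨q, hq2⟩ = 0 := by
  have h : (Z * fm) i ⟨q - 1, by omega⟩ = (fm * Z) i ⟨q - 1, by omega⟩ := by rw [hc]
  rw [mul_fm_apply hE, fm_mul_apply hE] at h
  rw [dif_pos (show n ≤ q - 1 ∧ (q - 1) + 1 < n + m from ⟨by omega, by omega⟩),
    dif_neg (show ¬(n + 1 ≤ i.val) by omega)] at h
  have h2 := (mul_eq_zero.mp h).resolve_right (cc_ne_zero (n := n) (m := m) (q := q - 1)
    (by omega) (by omega))
  rw [show (⟨q - 1 + 1, by omega⟩ : Fin (n + m)) = ⟨q, hq2⟩ from Fin.ext (show q - 1 + 1 = q by omega)] at h2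
  exact h2

lemma fact2 (q : ℕ) (j : Fin (n + m)) (hq1 : n ≤ q) (hq2 : q + 1 < n + m) (hj : j.val < n) :
    Z ⟨q, by omega⟩ j = 0 := by
  have h : (Z * fm) ⟨q + 1, hq2⟩ j = (fm * Z) ⟨q + 1, hq2⟩ j := by rw [hc]
  rw [mul_fm_apply hE, fm_mul_apply hE] at h
  rw [dif_neg (show ¬(n ≤ j.val ∧ j.val + 1 < n + m) by omega),
    dif_pos (show n + 1 ≤ q + 1 by omega)] at h
  exact (mul_eq_zero.mp h.symm).resolve_left (cc_ne_zero hq1 hq2)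

lemma fact3 (p q : ℕ) (hp1 : n + 1 ≤ p) (hp2 : p < n + m) (hq1 : n ≤ q) (hq2 : q + 1 < n + m) :
    Z ⟨p, hp2⟩ ⟨q + 1, hq2⟩ * cc n m q
      = cc n m (p - 1) * Z ⟨p - 1, by omega⟩ ⟨q, by omega⟩ := by
  have h : (Z * fm) ⟨p, hp2⟩ ⟨q, by omega⟩ = (fm * Z) ⟨p, hp2⟩ ⟨q, by omega⟩ := by rw [hc]
  rw [mul_fm_apply hE, fm_mul_apply hE] at h
  rw [dif_pos (show n ≤ q ∧ q + 1 < n + m from ⟨hq1, hq2⟩),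
    dif_pos (show n + 1 ≤ p from hp1)] at h
  exact h

lemma fact4 (d : ℕ) (hd : d < m) :
    Z ⟨n + d, by omega⟩ ⟨n + d, by omega⟩ = Z ⟨n, by omega⟩ ⟨n, by omega⟩ := by
  induction d with
  | zero => rfl
  | succ d ih =>
    have h := fact3 hE hc (n + d + 1) (n + d) (by omega) (by omega) (by omega) (by omega)
    have hcc : cc n m (n + d) ≠ 0 := cc_ne_zero (by omega) (by omega)
    rw [← ih (by omega)]
    exact mul_right_cancel₀ hcc (h.trans (mul_comm _ _))

lemma fact5 (d : ℕ) : ∀ (p : ℕ) (hd : n + d < n + m) (hp : p < n + m) (hlt : n + d < p),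
    Z ⟨n + d, hd⟩ ⟨p, hp⟩ = 0 := by
  induction d with
  | zero =>
    intro p hd hp hlt
    exact fact1 hE hc ⟨n + 0, hd⟩ p (show n + 0 ≤ n by omega) (by omega) hp
  | succ d ih =>
    intro p hd hp hlt
    have h0 := fact3 hE hc (n + d + 1) (p - 1) (by omega) (by omega) (by omega) (by omega)
    have h : Z ⟨n + d + 1, by omega⟩ ⟨p - 1 + 1, by omega⟩ * cc n m (p - 1)
        = cc n m (n + d) * Z ⟨n + d, by omega⟩ ⟨p - 1, by omega⟩ := h0
    rw [ih (p - 1) (by omega) (by omega) (by omega), mul_zero] at h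
    have h2 := (mul_eq_zero.mp h).resolve_right (cc_ne_zero (n := n) (m := m) (q := p - 1)
      (by omega) (by omega))
    rw [show (⟨p - 1 + 1, by omega⟩ : Fin (n + m)) = ⟨p, hp⟩ from Fin.ext (show p - 1 + 1 = p by omega)] at h2
    exact h2

lemma fact6 (d : ℕ) : ∀ (e : ℕ) (he : 1 ≤ e) (hb : n + d + e < n + m),
    Z ⟨n + d + e, hb⟩ ⟨n + d, by omega⟩ * gam n m n e
      = Z ⟨n + e, by omega⟩ ⟨n, by omega⟩ * gam n m (n + d) e := by
  induction d with
  | zero => intro e he hb; rfl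
  | succ d ih =>
    intro e he hb
    have h0 := fact3 hE hc (n + d + e + 1) (n + d) (by omega) (by omega) (by omega) (by omega)
    have h : Z ⟨n + d + e + 1, by omega⟩ ⟨n + d + 1, by omega⟩ * cc n m (n + d)
        = cc n m (n + d + e) * Z ⟨n + d + e, by omega⟩ ⟨n + d, by omega⟩ := h0
    have ih' := ih e he (by omega)
    have t1 := gam_succ n m (n + d) e
    have t2 := gam_succ' n m (n + d) e
    have hgam : gam n m (n + d) e * cc n m (n + d + e) = cc n m (n + d) * gam n m (n + d + 1) e :=
      t1.symm.trans t2
    have hcc : cc n m (n + d) ≠ 0 := cc_ne_zero (by omega) (by omega)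
    have main : (Z ⟨n + d + e + 1, by omega⟩ ⟨n + d + 1, by omega⟩ * gam n m n e)
          * cc n m (n + d)
        = (Z ⟨n + e, by omega⟩ ⟨n, by omega⟩ * gam n m (n + d + 1) e) * cc n m (n + d) := by
      linear_combination gam n m n e * h + cc n m (n + d + e) * ih'
        + Z ⟨n + e, by omega⟩ ⟨n, by omega⟩ * hgam
    have main2 := mul_right_cancel₀ hcc main
    rw [show (⟨n + d + e + 1, by omega⟩ : Fin (n + m)) = ⟨n + (d + 1) + e, hb⟩
      from Fin.ext (show n + d + e + 1 = n + (d + 1) + e by omega)] at main2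
    exact main2

end forward

section fwd2

variable {n m : ℕ}
  {fm : Matrix (Fin (n + m)) (Fin (n + m)) ℂ}
  {Z : Matrix (Fin (n + m)) (Fin (n + m)) ℂ}

set_option maxHeartbeats 3000000 in
lemma forward (hn : 1 ≤ n) (hm : 2 ≤ m)
    (hE : ∀ i j : Fin (n + m), fm i j =
      if i.val = j.val + 1 ∧ n ≤ j.val then cc n m j.val else 0)
    (hc : Z * fm = fm * Z) (htr : Matrix.trace Z = 0) :
    Z = Phi n m hn hm fm
      (fun i j : Fin n => Z (Fin.castLE (by have := hn; omega) i) (Fin.castLE (by have := hn; omega) j))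
      (fun i => Z (Fin.castLE (by have := hn; omega) i) ⟨n, by have := hn; omega⟩)
      (fun i => Z ⟨n + m - 1, by have := hn; omega⟩ (Fin.castLE (by have := hn; omega) i))
      (fun k => Z ⟨n + k.val + 1, by have := hn; omega⟩ ⟨n, by have := hn; omega⟩ / gam n m n (k.val + 1)) := by
  have hnm : n ≤ n + m := by omega
  -- the (n,n) entry is forced by the trace
  have hZnn : Z ⟨n, by omega⟩ ⟨n, by omega⟩
      = -((∑ i : Fin n, Z (Fin.castLE hnm i) (Fin.castLE hnm i)) / (m : ℂ)) := by
    have htr' : ∑ i : Fin (n + m), Z i i = 0 := htr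
    rw [Fin.sum_univ_add] at htr'
    have e2 : ∀ j : Fin m, Z (Fin.natAdd n j) (Fin.natAdd n j)
        = Z ⟨n, by omega⟩ ⟨n, by omega⟩ := fun j => fact4 hE hc j.val j.isLt
    have e1 : (∑ i : Fin n, Z (Fin.castAdd m i) (Fin.castAdd m i))
        = ∑ i : Fin n, Z (Fin.castLE hnm i) (Fin.castLE hnm i) :=
      Finset.sum_congr rfl fun i _ => by
        exact congrArg₂ Z (Fin.ext rfl) (Fin.ext rfl)
    rw [e1] at htr'
    simp only [e2, Finset.sum_const, Finset.card_univ, Fintype.card_fin, nsmul_eq_mul] at htr'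
    have hm0 : (m : ℂ) ≠ 0 := Nat.cast_ne_zero.mpr (by omega)
    field_simp
    linear_combination htr'
  ext a b
  erw [Phi_apply hn hm hE]
  by_cases ha : a.val < n
  · by_cases hb : b.val < n
    · rw [dif_pos (show a.val < n ∧ b.val < n from ⟨ha, hb⟩),
        if_neg (show ¬(a.val = b.val ∧ n ≤ a.val) by omega),
        dif_neg (show ¬(a.val < n ∧ b.val = n) by omega),
        dif_neg (show ¬(a.val = n + m - 1 ∧ b.val < n) by omega),
        dif_neg (show ¬(n ≤ b.val ∧ b.val < a.val) by omega)]
      simp only [mul_zero, sub_zero, add_zero]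
      rfl
    · by_cases hbn : b.val = n
      · rw [dif_neg (show ¬(a.val < n ∧ b.val < n) by omega),
          if_neg (show ¬(a.val = b.val ∧ n ≤ a.val) by omega),
          dif_pos (show a.val < n ∧ b.val = n from ⟨ha, hbn⟩),
          dif_neg (show ¬(a.val = n + m - 1 ∧ b.val < n) by omega),
          dif_neg (show ¬(n ≤ b.val ∧ b.val < a.val) by omega)]
        simp only [mul_zero, sub_zero, add_zero, zero_add, zero_sub, neg_zero]
        exact congrArg₂ Z (Fin.ext rfl) (Fin.ext hbn)
      · rw [dif_neg (show ¬(a.val < n ∧ b.val < n) by omega),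
          if_neg (show ¬(a.val = b.val ∧ n ≤ a.val) by omega),
          dif_neg (show ¬(a.val < n ∧ b.val = n) by omega),
          dif_neg (show ¬(a.val = n + m - 1 ∧ b.val < n) by omega),
          dif_neg (show ¬(n ≤ b.val ∧ b.val < a.val) by omega)]
        simp only [mul_zero, sub_zero, add_zero, zero_add, zero_sub, neg_zero]
        have h1 := fact1 hE hc a b.val (by omega) (by omega) b.isLt
        rw [show (⟨b.val, b.isLt⟩ : Fin (n + m)) = b from Fin.ext rfl] at h1
        exact h1
  · by_cases hb : b.val < n
    · by_cases ham : a.val = n + m - 1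
      · rw [dif_neg (show ¬(a.val < n ∧ b.val < n) by omega),
          if_neg (show ¬(a.val = b.val ∧ n ≤ a.val) by omega),
          dif_neg (show ¬(a.val < n ∧ b.val = n) by omega),
          dif_pos (show a.val = n + m - 1 ∧ b.val < n from ⟨ham, hb⟩),
          dif_neg (show ¬(n ≤ b.val ∧ b.val < a.val) by omega)]
        simp only [mul_zero, sub_zero, add_zero, zero_add, zero_sub, neg_zero]
        exact congrArg₂ Z (Fin.ext ham) (Fin.ext rfl)
      · rw [dif_neg (show ¬(a.val < n ∧ b.val < n) by omega),
          if_neg (show ¬(a.val = b.val ∧ n ≤ a.val) by omega),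
          dif_neg (show ¬(a.val < n ∧ b.val = n) by omega),
          dif_neg (show ¬(a.val = n + m - 1 ∧ b.val < n) by omega),
          dif_neg (show ¬(n ≤ b.val ∧ b.val < a.val) by omega)]
        simp only [mul_zero, sub_zero, add_zero, zero_add, zero_sub, neg_zero]
        have h2 := fact2 hE hc a.val b (by omega) (by omega) hb
        rw [show (⟨a.val, by omega⟩ : Fin (n + m)) = a from Fin.ext rfl] at h2
        exact h2
    · rcases lt_trichotomy a.val b.val with hab | hab | hab
      · rw [dif_neg (show ¬(a.val < n ∧ b.val < n) by omega),
          if_neg (show ¬(a.val = b.val ∧ n ≤ a.val) by omega),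
          dif_neg (show ¬(a.val < n ∧ b.val = n) by omega),
          dif_neg (show ¬(a.val = n + m - 1 ∧ b.val < n) by omega),
          dif_neg (show ¬(n ≤ b.val ∧ b.val < a.val) by omega)]
        simp only [mul_zero, sub_zero, add_zero, zero_add, zero_sub, neg_zero]
        have h5 := fact5 hE hc (a.val - n) b.val (by omega) b.isLt (by omega)
        rw [show (⟨n + (a.val - n), by omega⟩ : Fin (n + m)) = a
          from Fin.ext (show n + (a.val - n) = a.val by omega),
          show (⟨b.val, b.isLt⟩ : Fin (n + m)) = b from Fin.ext rfl] at h5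
        exact h5
      · rw [dif_neg (show ¬(a.val < n ∧ b.val < n) by omega),
          if_pos (show a.val = b.val ∧ n ≤ a.val from ⟨hab, by omega⟩),
          dif_neg (show ¬(a.val < n ∧ b.val = n) by omega),
          dif_neg (show ¬(a.val = n + m - 1 ∧ b.val < n) by omega),
          dif_neg (show ¬(n ≤ b.val ∧ b.val < a.val) by omega)]
        have h4 := fact4 hE hc (a.val - n) (by omega)
        have h4' : Z a b = Z ⟨n, by omega⟩ ⟨n, by omega⟩ := by
          rw [← h4]
          exact congrArg₂ Z (Fin.ext (show a.val = n + (a.val - n) by omega))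
            (Fin.ext (show b.val = n + (a.val - n) by omega))
        rw [h4', hZnn]
        ring
      · rw [dif_neg (show ¬(a.val < n ∧ b.val < n) by omega),
          if_neg (show ¬(a.val = b.val ∧ n ≤ a.val) by omega),
          dif_neg (show ¬(a.val < n ∧ b.val = n) by omega),
          dif_neg (show ¬(a.val = n + m - 1 ∧ b.val < n) by omega),
          dif_pos (show n ≤ b.val ∧ b.val < a.val from ⟨by omega, hab⟩)]
        simp only [mul_zero, sub_zero, add_zero, zero_add, zero_sub, neg_zero, Fin.val_mk]
        have h6 := fact6 hE hc (b.val - n) (a.val - b.val) (by omega) (by omega)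
        rw [show (⟨n + (b.val - n) + (a.val - b.val), by omega⟩ : Fin (n + m)) = a
            from Fin.ext (show n + (b.val - n) + (a.val - b.val) = a.val by omega),
          show (⟨n + (b.val - n), by omega⟩ : Fin (n + m)) = b
            from Fin.ext (show n + (b.val - n) = b.val by omega),
          show gam n m (n + (b.val - n)) (a.val - b.val) = gam n m b.val (a.val - b.val)
            from congrArg (fun t => gam n m t (a.val - b.val)) (by omega)] at h6
        rw [show (⟨n + (a.val - b.val - 1) + 1, by omega⟩ : Fin (n + m))
            = ⟨n + (a.val - b.val), by omega⟩
            from Fin.ext (show n + (a.val - b.val - 1) + 1 = n + (a.val - b.val) by omega),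
          show a.val - b.val - 1 + 1 = a.val - b.val by omega]
        have hg : gam n m n (a.val - b.val) ≠ 0 := gam_ne_zero (le_refl n) (by omega)
        field_simp
        linear_combination h6

end fwd2

section linmap

variable {n m : ℕ}

lemma Phi_inj (hn : 1 ≤ n) (hm : 2 ≤ m)
    {fm : Matrix (Fin (n + m)) (Fin (n + m)) ℂ}
    (hE : ∀ i j : Fin (n + m), fm i j =
      if i.val = j.val + 1 ∧ n ≤ j.val then cc n m j.val else 0)
    (x : Matrix (Fin n) (Fin n) ℂ) (u v : Fin n → ℂ) (w : Fin (m - 1) → ℂ)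
    (h : Phi n m hn hm fm x u v w = 0) : x = 0 ∧ u = 0 ∧ v = 0 ∧ w = 0 := by
  have hnm : n ≤ n + m := by omega
  have happ : ∀ a b : Fin (n + m), Phi n m hn hm fm x u v w a b = 0 := fun a b => by
    rw [h]; rfl
  refine ⟨?_, ?_, ?_, ?_⟩
  · ext i j
    have hx := happ (Fin.castLE hnm i) (Fin.castLE hnm j)
    rw [Phi_apply hn hm hE] at hx
    simp only [Fin.coe_castLE, Fin.val_mk] at hx
    have hi := i.isLt
    have hj := j.isLt
    rw [dif_pos (show i.val < n ∧ j.val < n from ⟨hi, hj⟩),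
      if_neg (show ¬(i.val = j.val ∧ n ≤ i.val) by omega),
      dif_neg (show ¬(i.val < n ∧ j.val = n) by omega),
      dif_neg (show ¬(i.val = n + m - 1 ∧ j.val < n) by omega),
      dif_neg (show ¬(n ≤ j.val ∧ j.val < i.val) by omega)] at hx
    simp only [mul_zero, sub_zero, add_zero] at hx
    have : x ⟨i.val, hi⟩ ⟨j.val, hj⟩ = x i j := congrArg₂ x (Fin.ext rfl) (Fin.ext rfl)
    rw [this] at hx
    simpa using hx
  · ext i
    have hu := happ (Fin.castLE hnm i) ⟨n, by omega⟩
    rw [Phi_apply hn hm hE] at hu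
    simp only [Fin.coe_castLE, Fin.val_mk] at hu
    have hi := i.isLt
    rw [dif_pos (show i.val < n ∧ True from ⟨hi, trivial⟩),
      dif_neg (show ¬(i.val = n + m - 1 ∧ n < n) by omega),
      dif_neg (show ¬(n ≤ n ∧ n < i.val) by omega)] at hu
    simp only [mul_zero, sub_zero, add_zero, zero_add, zero_sub, neg_zero] at hu
    have : u ⟨i.val, hi⟩ = u i := congrArg u (Fin.ext rfl)
    rw [this] at hu
    simpa [show ¬((i : ℕ) = n ∧ n ≤ (i : ℕ)) by omega] using hu
  · ext i
    have hv := happ ⟨n + m - 1, by omega⟩ (Fin.castLE hnm i)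
    rw [Phi_apply hn hm hE] at hv
    simp only [Fin.coe_castLE, Fin.val_mk] at hv
    have hi := i.isLt
    rw [dif_pos (show True ∧ i.val < n from ⟨trivial, hi⟩),
      dif_neg (show ¬(n ≤ i.val ∧ i.val < n + m - 1) by omega)] at hv
    simp only [mul_zero, sub_zero, add_zero, zero_add, zero_sub, neg_zero] at hv
    have : v ⟨i.val, hi⟩ = v i := congrArg v (Fin.ext rfl)
    rw [this] at hv
    simpa [show ¬(n + m - 1 < n) by omega,
      show ¬(n + m - 1 = (i : ℕ) ∧ n ≤ n + m - 1) by omega] using hv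
  · ext k
    have hk := k.isLt
    have hw := happ ⟨n + k.val + 1, by omega⟩ ⟨n, by omega⟩
    rw [Phi_apply hn hm hE] at hw
    simp only [Fin.coe_castLE, Fin.val_mk] at hw
    rw [dif_neg (show ¬(n + k.val + 1 < n ∧ True) from fun hq => by
        have := hq.1; omega),
      dif_neg (show ¬(n + k.val + 1 = n + m - 1 ∧ n < n) by omega),
      dif_pos (show n ≤ n ∧ n < n + k.val + 1 from ⟨le_refl n, by omega⟩)] at hw
    simp only [mul_zero, sub_zero, add_zero, zero_add, zero_sub, neg_zero] at hw
    have e1 : (⟨n + k.val + 1 - n - 1, by omega⟩ : Fin (m - 1)) = k :=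
      Fin.ext (show n + k.val + 1 - n - 1 = k.val by omega)
    rw [e1, show gam n m n (n + k.val + 1 - n) = gam n m n (k.val + 1)
      from congrArg _ (by omega)] at hw
    have hw2 : w k * gam n m n (k.val + 1) = 0 := by
      simpa [show ¬(n + (k : ℕ) + 1 < n ∧ n < n) by omega,
        show ¬(n + (k : ℕ) + 1 = n ∧ n ≤ n + (k : ℕ) + 1) by omega] using hw
    have hg : gam n m n (k.val + 1) ≠ 0 := gam_ne_zero (le_refl n) (by omega)
    exact (mul_eq_zero.mp hw2).resolve_right hg

set_option maxHeartbeats 4000000 in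
noncomputable def PhiL (n m : ℕ) (hn : 1 ≤ n) (hm : 2 ≤ m)
    (fm : Matrix (Fin (n + m)) (Fin (n + m)) ℂ)
    (hE : ∀ i j : Fin (n + m), fm i j =
      if i.val = j.val + 1 ∧ n ≤ j.val then cc n m j.val else 0) :
    (Matrix (Fin n) (Fin n) ℂ × (Fin n → ℂ) × (Fin n → ℂ) × (Fin (m - 1) → ℂ))
      →ₗ[ℂ] Matrix (Fin (n + m)) (Fin (n + m)) ℂ where
  toFun p := Phi n m hn hm fm p.1 p.2.1 p.2.2.1 p.2.2.2
  map_add' p q := by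
    ext a b
    erw [Matrix.add_apply, Phi_apply hn hm hE, Phi_apply hn hm hE, Phi_apply hn hm hE]
    split_ifs <;>
      simp only [Prod.fst_add, Prod.snd_add, Matrix.add_apply, Pi.add_apply,
        Finset.sum_add_distrib, add_div] <;>
      ring
  map_smul' c p := by
    ext a b
    erw [RingHom.id_apply, Matrix.smul_apply, Phi_apply hn hm hE, Phi_apply hn hm hE]
    split_ifs <;>
      simp only [Prod.smul_fst, Prod.smul_snd, Matrix.smul_apply, Pi.smul_apply, smul_eq_mul,
        ← Finset.mul_sum, mul_div_assoc] <;>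
      ring

end linmap

end SlodowyAux


open SlodowyAux

/-- Explicit description of the centralizer of `f_m` in `sl_{n+m}(ℂ)` (equivalently, of the
Slodowy slice `s_{n,m} = e_m + Ker ad(f_m)` shifted by `e_m`): it consists of the matrices
`Σ x_{ij}E_{i,j} − (Σ x_{ii}/m)·Σ_{j>n} E_{j,j} + Σ u_i E_{i,n+1} + Σ v_i E_{n+m,i} + Σ w_k f_m^k`;
in particular it has dimension `n² + 2n + m − 1`. -/
theorem sl_slodowy_slice (n m : ℕ) (hn : 1 ≤ n) (hm : 2 ≤ m)
    (fm : Matrix (Fin (n + m)) (Fin (n + m)) ℂ)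
    (hfm : fm = ∑ j : Fin (m - 1),
      Matrix.single ⟨n + j.val + 1, by have := j.isLt; omega⟩
        ⟨n + j.val, by have := j.isLt; omega⟩ (((j.val + 1) * (m - (j.val + 1)) : ℕ) : ℂ)) :
    ((LinearMap.ker (Matrix.traceLinearMap (Fin (n + m)) ℂ ℂ) ⊓
        LinearMap.ker (LinearMap.mulRight ℂ fm - LinearMap.mulLeft ℂ fm) :
          Submodule ℂ (Matrix (Fin (n + m)) (Fin (n + m)) ℂ)) : Set _)
      = {Z : Matrix (Fin (n + m)) (Fin (n + m)) ℂ |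
          ∃ (x : Matrix (Fin n) (Fin n) ℂ) (u v : Fin n → ℂ) (w : Fin (m - 1) → ℂ),
            Z = (∑ i : Fin n, ∑ j : Fin n, x i j •
                  Matrix.single (Fin.castLE (by omega) i)
                    (Fin.castLE (by omega) j) (1 : ℂ))
              - ((∑ i : Fin n, x i i) / (m : ℂ)) •
                  (∑ j : Fin m, Matrix.single (Fin.natAdd n j) (Fin.natAdd n j) (1 : ℂ))
              + (∑ i : Fin n, u i • Matrix.single (Fin.castLE (by omega) i)
                  ⟨n, by omega⟩ (1 : ℂ))
              + (∑ i : Fin n, v i • Matrix.single ⟨n + m - 1, by omega⟩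
                  (Fin.castLE (by omega) i) (1 : ℂ))
              + (∑ k : Fin (m - 1), w k • fm ^ (k.val + 1))}
    ∧ Module.finrank ℂ
        ↥(LinearMap.ker (Matrix.traceLinearMap (Fin (n + m)) ℂ ℂ) ⊓
          LinearMap.ker (LinearMap.mulRight ℂ fm - LinearMap.mulLeft ℂ fm))
        = n ^ 2 + 2 * n + m - 1 := by
  have hE := hfm_entry n m hn hm fm hfm
  have hset : ((LinearMap.ker (Matrix.traceLinearMap (Fin (n + m)) ℂ ℂ) ⊓
        LinearMap.ker (LinearMap.mulRight ℂ fm - LinearMap.mulLeft ℂ fm) :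
          Submodule ℂ (Matrix (Fin (n + m)) (Fin (n + m)) ℂ)) : Set _)
      = {Z : Matrix (Fin (n + m)) (Fin (n + m)) ℂ |
          ∃ (x : Matrix (Fin n) (Fin n) ℂ) (u v : Fin n → ℂ) (w : Fin (m - 1) → ℂ),
            Z = Phi n m hn hm fm x u v w} := by
    ext Z
    simp only [SetLike.mem_coe, Submodule.mem_inf, LinearMap.mem_ker, LinearMap.sub_apply,
      LinearMap.mulRight_apply, LinearMap.mulLeft_apply, Set.mem_setOf_eq]
    constructor
    · rintro ⟨h1, h2⟩
      have hc : Z * fm = fm * Z := sub_eq_zero.mp h2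
      have htr : Matrix.trace Z = 0 := h1
      exact ⟨_, _, _, _, forward hn hm hE hc htr⟩
    · rintro ⟨x, u, v, w, rfl⟩
      exact ⟨Phi_trace hn hm hE x u v w, sub_eq_zero.mpr (Phi_comm hn hm hE x u v w)⟩
  constructor
  · rw [hset]
    rfl
  · have hrange : (LinearMap.ker (Matrix.traceLinearMap (Fin (n + m)) ℂ ℂ) ⊓
        LinearMap.ker (LinearMap.mulRight ℂ fm - LinearMap.mulLeft ℂ fm))
        = LinearMap.range (PhiL n m hn hm fm hE) := by
      ext Z
      have hZ := Set.ext_iff.mp hset Z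
      simp only [SetLike.mem_coe, Set.mem_setOf_eq] at hZ
      rw [LinearMap.mem_range]
      constructor
      · intro hz
        obtain ⟨x, u, v, w, hx⟩ := hZ.mp hz
        exact ⟨⟨x, u, v, w⟩, hx.symm⟩
      · rintro ⟨⟨x, u, v, w⟩, hp⟩
        exact hZ.mpr ⟨x, u, v, w, hp.symm⟩
    rw [hrange, LinearMap.finrank_range_of_inj]
    · simp only [Module.finrank_prod, Module.finrank_pi, Module.finrank_matrix,
        Fintype.card_fin, Module.finrank_self, mul_one]
      rw [pow_two]
      omega
    · rw [injective_iff_map_eq_zero]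
      intro p hp
      obtain ⟨hx, hu, hv, hw⟩ := Phi_inj hn hm hE p.1 p.2.1 p.2.2.1 p.2.2.2 hp
      exact Prod.ext hx (Prod.ext hu (Prod.ext hv hw))
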